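/- During phase 1 of the weak-gathering algorithm, the distance of each agent's pebble to the cycle is non-increasing: if d_t(p_α, C) denotes the shortest-path distance in the underlying unicyclic graph between the pebble p_α of agent α and the nearest node of the unique cycle C at round t, then the sequence {d_t(p_α, C)}_{t ≥ 0} is decreasing, i.e., d_t(p_α, C) ≥ d_{t+1}(p_α, C) for all t ≥ 0; moreover every time agent α moves its pebble, the pebble moves strictly closer to C, and eventually the pebble reaches a node of C. -/

import Mathlib

/-!
Statement 4 (Lemma `weak-gathering-1` of the paper): during phase 1 of the
weak-gathering algorithm the distance of each agent's pebble to the unique cycle is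
non-increasing, each actual move of a pebble brings it strictly closer to the cycle,
and (provided the pebble keeps being moved while off the cycle) it eventually reaches
the cycle.

We model the relevant part of phase 1 abstractly and faithfully: `marked t` is the set
of nodes marked `∉C` by the agent up to round `t`.  No node is marked initially,
marks are never removed, and a node may only become marked when all but (at most) one
of its neighbors are already marked — exactly the iterated leaf-pruning rule of the
algorithm.  The pebble starts at the agent's initial node and in each round either
stays put, or — when its node is marked — is moved to an adjacent unmarked node
(the algorithm moves it to the unique unmarked neighbor).
-/

open SimpleGraph

/-- A unicyclic graph: connected with as many edges as vertices. -/
def Unicyclic {V : Type} [Fintype V] [DecidableEq V]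
    (G : SimpleGraph V) [DecidableRel G.Adj] : Prop :=
  G.Connected ∧ G.edgeFinset.card = Fintype.card V

/-- Shortest-path distance from a node to the set `C` of cycle nodes. -/
noncomputable def distToCycle {V : Type} (G : SimpleGraph V) (C : Set V) (x : V) : ℕ :=
  sInf {d : ℕ | ∃ c ∈ C, G.dist x c = d}

namespace PebbleAux

variable {V : Type} {G : SimpleGraph V}

lemma first_edge_mem {u w : V} (p : G.Walk u w) (hp : ¬ p.Nil) :
    s(u, p.getVert 1) ∈ p.edges := by
  cases p with
  | nil => simp at hp
  | cons h q => simp [Walk.snd_cons]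

lemma getVert_one_mem_support {u w : V} (p : G.Walk u w) : p.getVert 1 ∈ p.support := by
  cases p with
  | nil => exact Walk.start_mem_support _
  | cons h q => simp [Walk.snd_cons, Walk.start_mem_support]

/-- A cycle through `u` gives two distinct neighbors of `u` in the tail of its support. -/
lemma cycle_neighbors' {u : V} (q : G.Walk u u) (hq : q.IsCycle) :
    ∃ a b, a ≠ b ∧ G.Adj u a ∧ G.Adj u b ∧ a ∈ q.support.tail ∧ b ∈ q.support.tail := by
  have h3 := hq.three_le_length
  cases q with
  | nil => exact absurd hq Walk.IsCycle.not_of_nil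
  | @cons _ x _ h p =>
    rw [Walk.cons_isCycle_iff] at hq
    obtain ⟨hp, he⟩ := hq
    simp only [Walk.length_cons] at h3
    have hplen : 2 ≤ p.length := by omega
    have hbadj : G.Adj (p.getVert (p.length - 1)) u := by
      have := p.adj_getVert_succ (i := p.length - 1) (by omega)
      rwa [show p.length - 1 + 1 = p.length by omega, Walk.getVert_length] at this
    have hbrev : p.reverse.getVert 1 = p.getVert (p.length - 1) := by
      rw [Walk.getVert_reverse]
    have hbmem : p.getVert (p.length - 1) ∈ p.support := by
      have := getVert_one_mem_support p.reverse
      rwa [hbrev, Walk.support_reverse, List.mem_reverse] at this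
    have hbedge : s(u, p.getVert (p.length - 1)) ∈ p.edges := by
      have := first_edge_mem p.reverse (by
        rw [Walk.not_nil_iff_lt_length, Walk.length_reverse]; omega)
      rw [hbrev, Walk.edges_reverse, List.mem_reverse] at this
      exact this
    have hxb : x ≠ p.getVert (p.length - 1) := by
      intro hxb
      rw [← hxb] at hbedge
      exact he hbedge
    exact ⟨x, p.getVert (p.length - 1), hxb, h, hbadj.symm,
      by simp [Walk.start_mem_support], by simpa using hbmem⟩

lemma cycle_two_neighbors [DecidableEq V] {v u : V} (cyc : G.Walk v v) (hcyc : cyc.IsCycle)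
    (hu : u ∈ cyc.support) :
    ∃ a b, a ≠ b ∧ G.Adj u a ∧ G.Adj u b ∧ a ∈ cyc.support ∧ b ∈ cyc.support := by
  obtain ⟨a, b, hab, ha, hb, ha', hb'⟩ := cycle_neighbors' (cyc.rotate u hu) (hcyc.rotate hu)
  have perm := Walk.support_rotate cyc u hu
  have hta : a ∈ cyc.support.tail := perm.mem_iff.mp ha'
  have htb : b ∈ cyc.support.tail := perm.mem_iff.mp hb'
  exact ⟨a, b, hab, ha, hb, (List.tail_sublist _).mem hta, (List.tail_sublist _).mem htb⟩

lemma distToCycle_exists {C : Set V} (hCne : C.Nonempty) (x : V) :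
    ∃ c ∈ C, G.dist x c = distToCycle G C x := by
  have hne : {d : ℕ | ∃ c ∈ C, G.dist x c = d}.Nonempty := by
    obtain ⟨c, hc⟩ := hCne
    exact ⟨G.dist x c, c, hc, rfl⟩
  exact Nat.sInf_mem hne

lemma distToCycle_le {C : Set V} (x : V) {c : V} (hc : c ∈ C) :
    distToCycle G C x ≤ G.dist x c :=
  Nat.sInf_le ⟨c, hc, rfl⟩

lemma distToCycle_eq_zero_iff (hconn : G.Connected) {C : Set V} (hCne : C.Nonempty) (x : V) :
    distToCycle G C x = 0 ↔ x ∈ C := by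
  constructor
  · intro h0
    obtain ⟨c, hc, hd⟩ := distToCycle_exists hCne x
    rw [h0] at hd
    rwa [(hconn.dist_eq_zero_iff).mp hd]
  · intro hx
    have h1 : distToCycle G C x ≤ G.dist x x := distToCycle_le x hx
    have h2 : G.dist x x = 0 := SimpleGraph.dist_self
    omega

/-- Off the cycle, there is always a neighbor strictly closer to the cycle. -/
lemma distToCycle_step (hconn : G.Connected) {C : Set V} (hCne : C.Nonempty)
    {x : V} (hx : x ∉ C) :
    ∃ w, G.Adj x w ∧ distToCycle G C w < distToCycle G C x := by
  have h0 : distToCycle G C x ≠ 0 := fun h =>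
    hx ((distToCycle_eq_zero_iff hconn hCne x).mp h)
  obtain ⟨c, hc, hd⟩ := distToCycle_exists (G := G) hCne x
  obtain ⟨p, hplen⟩ := hconn.exists_walk_length_eq_dist x c
  have hpnil : ¬ p.Nil := by
    rw [Walk.not_nil_iff_lt_length]
    omega
  refine ⟨p.getVert 1, p.adj_snd hpnil, ?_⟩
  have htail : p.tail.length + 1 = p.length := Walk.length_tail_add_one hpnil
  have h1 : distToCycle G C (p.getVert 1) ≤ G.dist (p.getVert 1) c :=
    distToCycle_le _ hc
  have h2 : G.dist (p.getVert 1) c ≤ p.tail.length := SimpleGraph.dist_le _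
  omega

end PebbleAux

/-- Let `d_t(p_α, C)` be the distance between the pebble of agent `α`
and the cycle `C` at round `t`.  Then `{d_t(p_α, C)}_{t ≥ 0}` is decreasing
(`d_t ≥ d_{t+1}` for all `t`); moreover every time the pebble is moved it gets strictly
closer to `C`, and — as long as the agent keeps moving its pebble while it is off the
cycle — the pebble eventually reaches a node of `C`. -/
theorem pebble_distance_decreasing
    {V : Type} [Fintype V] [DecidableEq V]
    (G : SimpleGraph V) [DecidableRel G.Adj] (hU : Unicyclic G)
    {v : V} (cyc : G.Walk v v) (hcyc : cyc.IsCycle)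
    (C : Set V) (hC : C = {x | x ∈ cyc.support})
    (marked : ℕ → Finset V)
    (hmarked0 : marked 0 = ∅)
    (hmono : ∀ t, marked t ⊆ marked (t + 1))
    (hrule : ∀ t u, u ∈ marked (t + 1) → u ∉ marked t →
      ((G.neighborFinset u).filter (fun w => w ∉ marked t)).card ≤ 1)
    (pebble : ℕ → V)
    (hpeb : ∀ t, pebble (t + 1) = pebble t ∨
      (pebble t ∈ marked t ∧ G.Adj (pebble t) (pebble (t + 1)) ∧
        pebble (t + 1) ∉ marked t)) :
    (∀ t, distToCycle G C (pebble (t + 1)) ≤ distToCycle G C (pebble t)) ∧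
    (∀ t, pebble (t + 1) ≠ pebble t →
      distToCycle G C (pebble (t + 1)) < distToCycle G C (pebble t)) ∧
    ((∀ t, pebble t ∉ C → ∃ t', t ≤ t' ∧ pebble (t' + 1) ≠ pebble t') →
      ∃ t, pebble t ∈ C) := by
  classical
  obtain ⟨hconn, -⟩ := hU
  have hCne : C.Nonempty := ⟨v, by rw [hC]; exact cyc.start_mem_support⟩
  -- The key invariant: marked nodes are off the cycle, and any unmarked neighbor of a
  -- marked node is strictly closer to the cycle.
  have key : ∀ t, (∀ u ∈ marked t, u ∉ C) ∧
      (∀ u ∈ marked t, ∀ w, G.Adj u w → w ∉ marked t →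
        distToCycle G C w < distToCycle G C u) := by
    intro t
    induction t with
    | zero => simp [hmarked0]
    | succ t ih =>
      obtain ⟨ih1, ih2⟩ := ih
      have hnotC : ∀ u ∈ marked (t + 1), u ∉ C := by
        intro u hu huC
        by_cases h : u ∈ marked t
        · exact ih1 u h huC
        · have hcard := hrule t u hu h
          have husup : u ∈ cyc.support := by rw [hC] at huC; exact huC
          obtain ⟨a, b, hab, ha, hb, haC, hbC⟩ :=
            PebbleAux.cycle_two_neighbors cyc hcyc husup
          have hauns : a ∉ marked t := fun hm => ih1 a hm (by rw [hC]; exact haC)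
          have hbuns : b ∉ marked t := fun hm => ih1 b hm (by rw [hC]; exact hbC)
          have hamem : a ∈ (G.neighborFinset u).filter (fun w => w ∉ marked t) := by
            simp [ha, hauns]
          have hbmem : b ∈ (G.neighborFinset u).filter (fun w => w ∉ marked t) := by
            simp [hb, hbuns]
          exact hab (Finset.card_le_one.mp hcard a hamem b hbmem)
      refine ⟨hnotC, ?_⟩
      intro u hu w hadj hw
      have hw' : w ∉ marked t := fun h => hw (hmono t h)
      by_cases h : u ∈ marked t
      · exact ih2 u h w hadj hw'
      · have huC : u ∉ C := hnotC u hu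
        obtain ⟨w0, hw0adj, hw0lt⟩ := PebbleAux.distToCycle_step hconn hCne huC
        have hw0un : w0 ∉ marked t := by
          intro hm
          have := ih2 w0 hm u hw0adj.symm h
          omega
        have hcard := hrule t u hu h
        have hmemw : w ∈ (G.neighborFinset u).filter (fun x => x ∉ marked t) := by
          simp [hadj, hw']
        have hmemw0 : w0 ∈ (G.neighborFinset u).filter (fun x => x ∉ marked t) := by
          simp [hw0adj, hw0un]
        have : w = w0 := Finset.card_le_one.mp hcard w hmemw w0 hmemw0
        rw [this]
        exact hw0lt
  have part2 : ∀ t, pebble (t + 1) ≠ pebble t →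
      distToCycle G C (pebble (t + 1)) < distToCycle G C (pebble t) := by
    intro t hne
    rcases hpeb t with h | ⟨hm, hadj, hnm⟩
    · exact absurd h hne
    · exact (key t).2 (pebble t) hm (pebble (t + 1)) hadj hnm
  have part1 : ∀ t, distToCycle G C (pebble (t + 1)) ≤ distToCycle G C (pebble t) := by
    intro t
    by_cases h : pebble (t + 1) = pebble t
    · rw [h]
    · exact le_of_lt (part2 t h)
  refine ⟨part1, part2, ?_⟩
  intro hmove
  by_contra hno
  push_neg at hno
  have mono2 : ∀ s s', s ≤ s' →
      distToCycle G C (pebble s') ≤ distToCycle G C (pebble s) := by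
    intro s s' h
    induction h with
    | refl => exact le_rfl
    | step h ih => exact le_trans (part1 _) ih
  have main : ∀ d t, distToCycle G C (pebble t) ≤ d → False := by
    intro d
    induction d with
    | zero =>
      intro t ht
      exact hno t ((PebbleAux.distToCycle_eq_zero_iff hconn hCne _).mp (Nat.le_zero.mp ht))
    | succ d ihd =>
      intro t ht
      obtain ⟨t', htt', hne⟩ := hmove t (hno t)
      have h1 := part2 t' hne
      have h2 : distToCycle G C (pebble t') ≤ d + 1 := le_trans (mono2 t t' htt') ht
      exact ihd (t' + 1) (by omega)
  exact main (distToCycle G C (pebble 0)) 0 le_rfl
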